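/- The class D, consisting of all double-chain graphs D_n and their induced subgraphs, is well-quasi-ordered by the induced subgraph relation. -/

import Mathlib

/-- The simple graph on `A ⊕ B` associated with a bipartite adjacency `adj`. -/
def biSimple {A B : Type*} (adj : A → B → Prop) : SimpleGraph (A ⊕ B) where
  Adj u v :=
    (∃ a b, u = Sum.inl a ∧ v = Sum.inr b ∧ adj a b) ∨
    (∃ a b, u = Sum.inr b ∧ v = Sum.inl a ∧ adj a b)
  symm := by
    constructor
    rintro u v (⟨a, b, rfl, rfl, hab⟩ | ⟨a, b, rfl, rfl, hab⟩)
    · exact Or.inr ⟨a, b, rfl, rfl, hab⟩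
    · exact Or.inl ⟨a, b, rfl, rfl, hab⟩
  loopless := by
    constructor
    rintro u (⟨a, b, h₁, h₂, -⟩ | ⟨a, b, h₁, h₂, -⟩) <;> subst h₁ <;> simp_all

/-- The index in the chain graph `Z_{3n}` (0-indexed) of the vertex `(t, s)` of `D_n`. -/
def dIdx {n : ℕ} (p : Fin n × Fin 2) : ℕ := 3 * (p.1 : ℕ) + (p.2 : ℕ)

/-- The double-chain graph `D_n` (as a bipartite adjacency): obtained from `Z_{3n}`
(edges `a_i b_j` for `i ≤ j`) by deleting the matching `a_i b_{i+1}` and the vertices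
with index `≡ 2 (mod 3)`. -/
def DAdj (n : ℕ) (p q : Fin n × Fin 2) : Prop :=
  dIdx p ≤ dIdx q ∧ dIdx q ≠ dIdx p + 1

lemma biSimple_adj {A B : Type*} {adj : A → B → Prop} {u v : A ⊕ B} :
    (biSimple adj).Adj u v ↔
      (∃ a b, u = Sum.inl a ∧ v = Sum.inr b ∧ adj a b) ∨
      (∃ a b, u = Sum.inr b ∧ v = Sum.inl a ∧ adj a b) := Iff.rfl

lemma dadj_iff {n : ℕ} {p q : Fin n × Fin 2} :
    DAdj n p q ↔ ((p.1 : ℕ) < (q.1 : ℕ) ∨ ((p.1 : ℕ) = (q.1 : ℕ) ∧ (p.2 : ℕ) = (q.2 : ℕ))) := by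
  have h1 : (p.2 : ℕ) < 2 := p.2.isLt
  have h2 : (q.2 : ℕ) < 2 := q.2.isLt
  unfold DAdj dIdx
  omega

lemma pwo_univ_eq {α : Type*} [Finite α] :
    (Set.univ : Set α).PartiallyWellOrderedOn (· = ·) := by
  rw [Set.partiallyWellOrderedOn_iff_exists_lt]
  intro f _
  obtain ⟨x, y, hxy, hf⟩ := Finite.exists_ne_map_eq_of_infinite f
  rcases hxy.lt_or_gt with h | h
  · exact ⟨x, y, h, hf⟩
  · exact ⟨y, x, h, hf.symm⟩

def vtx {N : ℕ} (t : Fin N) (p : Fin 2 × Bool) : (Fin N × Fin 2) ⊕ (Fin N × Fin 2) :=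
  if p.2 then Sum.inr (t, p.1) else Sum.inl (t, p.1)

noncomputable def letterOf {N m : ℕ} (e : Fin m → (Fin N × Fin 2) ⊕ (Fin N × Fin 2)) (t : Fin N) :
    Fin 2 × Bool → Bool := fun p => decide (∃ v, e v = vtx t p)


/-- the class `𝒟` of all double-chain graphs `D_n` and their induced
subgraphs is well-quasi-ordered by the induced subgraph relation: in any infinite
sequence of graphs from `𝒟` there are `i < j` with the `i`-th graph an induced subgraph
of the `j`-th. -/
theorem D_class_wqo (sz : ℕ → ℕ) (G : ∀ i : ℕ, SimpleGraph (Fin (sz i)))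
    (h : ∀ i, ∃ n, Nonempty (G i ↪g biSimple (DAdj n))) :
    ∃ i j, i < j ∧ Nonempty (G i ↪g G j) := by
  classical
  choose n he using h
  set e : ∀ i, G i ↪g biSimple (DAdj (n i)) := fun i => (he i).some with he_def
  set w : ℕ → List (Fin 2 × Bool → Bool) :=
    fun i => (List.finRange (n i)).map (letterOf (e i)) with hw
  have hpwo := (pwo_univ_eq (α := Fin 2 × Bool → Bool)).partiallyWellOrderedOn_sublistForall₂
    (· = ·)
  obtain ⟨i, j, hij, hsub⟩ := hpwo.exists_lt (f := w) (fun k => by simp)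
  rw [List.sublistForall₂_iff] at hsub
  obtain ⟨l, hl, hsl⟩ := hsub
  rw [List.forall₂_eq_eq_eq] at hl
  subst hl
  rw [List.sublist_iff_exists_fin_orderEmbedding_get_eq] at hsl
  obtain ⟨f, hf⟩ := hsl
  have hleni : (w i).length = n i := by simp [hw]
  have hlenj : (w j).length = n j := by simp [hw]
  set φ : Fin (n i) → Fin (n j) :=
    fun t => Fin.cast hlenj (f (Fin.cast hleni.symm t)) with hφ
  have hφlt : ∀ a b : Fin (n i), φ a < φ b ↔ a < b := by
    intro a b
    have := f.lt_iff_lt (a := Fin.cast hleni.symm a) (b := Fin.cast hleni.symm b)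
    simpa only [hφ, Fin.lt_def, Fin.coe_cast] using this
  have hφinj : Function.Injective φ := by
    intro a b hab
    have := (hφlt a b).symm
    rcases lt_trichotomy a b with hlt | heq | hlt
    · exact absurd ((hφlt a b).2 hlt) (by simp [hab])
    · exact heq
    · exact absurd ((hφlt b a).2 hlt) (by simp [hab])
  have hletter : ∀ t : Fin (n i), letterOf (e i) t = letterOf (e j) (φ t) := by
    intro t
    have := hf (Fin.cast hleni.symm t)
    simp [hw, List.get_eq_getElem, List.getElem_map, List.getElem_finRange, hφ] at this
    exact this
  set g : Fin (n i) × Fin 2 → Fin (n j) × Fin 2 := Prod.map φ id with hg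
  have hφval_lt : ∀ a b : Fin (n i), ((φ a : ℕ) < (φ b : ℕ)) ↔ ((a : ℕ) < (b : ℕ)) := by
    intro a b
    have := hφlt a b
    simpa only [Fin.lt_def] using this
  have hφval_eq : ∀ a b : Fin (n i), ((φ a : ℕ) = (φ b : ℕ)) ↔ ((a : ℕ) = (b : ℕ)) := by
    intro a b
    rw [Fin.val_eq_val, Fin.val_eq_val, hφinj.eq_iff]
  have hDadj : ∀ p q : Fin (n i) × Fin 2, DAdj (n j) (g p) (g q) ↔ DAdj (n i) p q := by
    intro p q
    rw [dadj_iff, dadj_iff]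
    simp only [hg, Prod.map_fst, Prod.map_snd, id_eq, hφval_lt, hφval_eq]
  have hM : ∀ u v, (biSimple (DAdj (n j))).Adj (Sum.map g g u) (Sum.map g g v) ↔
      (biSimple (DAdj (n i))).Adj u v := by
    rintro (p | p) (q | q) <;>
      simp [biSimple_adj, hDadj]
  have hMem : ∀ v : Fin (sz i), ∃ u : Fin (sz j), e j u = Sum.map g g (e i v) := by
    intro v
    rcases hev : e i v with p | p
    · have hlet := congrFun (hletter p.1) (p.2, false)
      have hL : letterOf (e i) p.1 (p.2, false) = true := by
        rw [letterOf, decide_eq_true_iff]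
        exact ⟨v, by rw [hev]; simp [vtx]⟩
      rw [hlet, letterOf, decide_eq_true_iff] at hL
      obtain ⟨u, hu⟩ := hL
      exact ⟨u, by rw [hu]; simp [vtx, hg, Prod.map, Prod.ext_iff]⟩
    · have hlet := congrFun (hletter p.1) (p.2, true)
      have hL : letterOf (e i) p.1 (p.2, true) = true := by
        rw [letterOf, decide_eq_true_iff]
        exact ⟨v, by rw [hev]; simp [vtx]⟩
      rw [hlet, letterOf, decide_eq_true_iff] at hL
      obtain ⟨u, hu⟩ := hL
      exact ⟨u, by rw [hu]; simp [vtx, hg, Prod.map, Prod.ext_iff]⟩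
  set F : Fin (sz i) → Fin (sz j) := fun v => (hMem v).choose with hF
  have hFspec : ∀ v, e j (F v) = Sum.map g g (e i v) := fun v => (hMem v).choose_spec
  have hginj : Function.Injective g := by
    intro a b hab
    have h1 := congrArg Prod.fst hab
    have h2 := congrArg Prod.snd hab
    simp only [hg, Prod.map_fst, Prod.map_snd, id_eq] at h1 h2
    exact Prod.ext (hφinj h1) h2
  have hMinj : Function.Injective (Sum.map g g) := hginj.sumMap hginj
  refine ⟨i, j, hij, ⟨⟨⟨F, ?_⟩, ?_⟩⟩⟩
  · intro a b hab
    apply (e i).injective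
    apply hMinj
    rw [← hFspec, ← hFspec, hab]
  · intro a b
    show (G j).Adj (F a) (F b) ↔ (G i).Adj a b
    rw [← (e j).map_adj_iff, hFspec, hFspec, hM, (e i).map_adj_iff]
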